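/- Let H be a separable complex Hilbert space, C a conjugation on H, and T a C-normal bounded linear operator on H that is a partial isometry (‖Tx‖ = ‖x‖ for all x ∈ (ker T)ᗮ). Then T = U ∘ P, where U is a C-normal unitary operator on H and P is the orthogonal projection onto (ker T)ᗮ. -/

import Mathlib

open scoped InnerProductSpace
open ContinuousLinearMap TopologicalSpace

/-- A conjugation on a complex Hilbert space: an anti-linear, involutive map
satisfying `⟪C x, C y⟫ = ⟪y, x⟫`. -/
def Conjugation {K : Type*} [NormedAddCommGroup K] [InnerProductSpace ℂ K] (C : K → K) : Prop :=
  (∀ (a : ℂ) (x y : K), C (a • x + y) = (starRingEnd ℂ) a • C x + C y) ∧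
  (∀ x, C (C x) = x) ∧
  (∀ x y : K, ⟪C x, C y⟫_ℂ = ⟪y, x⟫_ℂ)

/-- `T` is `C`-normal: `C T*T C = T T*` (pointwise). -/
def CNormal {K : Type*} [NormedAddCommGroup K] [InnerProductSpace ℂ K] [CompleteSpace K]
    (C : K → K) (T : K →L[ℂ] K) : Prop :=
  ∀ x, C (adjoint T (T (C x))) = T (adjoint T x)

set_option maxHeartbeats 1000000 in
set_option synthInstance.maxHeartbeats 100000 in
/-- A `C`-normal partial isometry `T` factors as `T = U ∘ P` with `U` a `C`-normal
unitary and `P` the orthogonal projection onto `(ker T)ᗮ`. -/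
theorem stmt_5 {H : Type*} [NormedAddCommGroup H] [InnerProductSpace ℂ H] [CompleteSpace H]
    [SeparableSpace H]
    (C : H → H) (hC : Conjugation C)
    (T : H →L[ℂ] H) (hT : CNormal C T)
    (hTpi : ∀ x ∈ (LinearMap.ker (T : H →ₗ[ℂ] H))ᗮ, ‖T x‖ = ‖x‖) :
    ∃ U : H →L[ℂ] H,
      adjoint U * U = 1 ∧ U * adjoint U = 1 ∧ CNormal C U ∧
      ∀ x, T x = U ((Submodule.orthogonalProjectionOnto (LinearMap.ker (T : H →ₗ[ℂ] H))ᗮ x : H)) := by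
  classical
  obtain ⟨hClin, hCinv, hCinner⟩ := hC
  set N : Submodule ℂ H := LinearMap.ker (T : H →ₗ[ℂ] H) with hN
  set M : Submodule ℂ H := (LinearMap.range (T : H →ₗ[ℂ] H))ᗮ with hM
  haveI : CompleteSpace N := (ContinuousLinearMap.isClosed_ker T).completeSpace_coe
  haveI : CompleteSpace M := (LinearMap.range (T : H →ₗ[ℂ] H)).isClosed_orthogonal.completeSpace_coe
  haveI : CompleteSpace Nᗮ := N.isClosed_orthogonal.completeSpace_coe
  haveI hopN : Submodule.HasOrthogonalProjection N := Submodule.HasOrthogonalProjection.ofCompleteSpace _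
  haveI hopNo : Submodule.HasOrthogonalProjection Nᗮ := Submodule.HasOrthogonalProjection.ofCompleteSpace _
  haveI hopM : Submodule.HasOrthogonalProjection M := Submodule.HasOrthogonalProjection.ofCompleteSpace _
  haveI hopMo : Submodule.HasOrthogonalProjection Mᗮ := inferInstance
  -- basic properties of the conjugation
  have hadd : ∀ x y : H, C (x + y) = C x + C y := by
    intro x y; simpa using hClin 1 x y
  have hzero : C 0 = 0 := by
    have h := hadd 0 0
    simp only [add_zero] at h
    exact left_eq_add.mp h
  have hsmul : ∀ (a : ℂ) (x : H), C (a • x) = (starRingEnd ℂ) a • C x := by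
    intro a x; simpa [hzero] using hClin a x 0
  have hflip : ∀ x y : H, ⟪C x, y⟫_ℂ = ⟪C y, x⟫_ℂ := by
    intro x y
    conv_lhs => rw [← hCinv y]
    exact hCinner x (C y)
  -- C maps ker T into (ran T)ᗮ
  have hTstarC : ∀ x ∈ N, adjoint T (C x) = 0 := by
    intro x hx
    have hx0 : T x = 0 := LinearMap.mem_ker.mp hx
    have key : T (adjoint T (C x)) = C (adjoint T (T x)) := by
      have h := hT (C x)
      rw [hCinv x] at h
      exact h.symm
    have : ⟪adjoint T (C x), adjoint T (C x)⟫_ℂ = 0 := by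
      rw [ContinuousLinearMap.adjoint_inner_left, key, hCinner,
        ContinuousLinearMap.adjoint_inner_left, hx0, inner_zero_left]
    exact inner_self_eq_zero.mp this
  have hCNM : ∀ x ∈ N, C x ∈ M := by
    intro x hx
    rw [hM, Submodule.mem_orthogonal]
    rintro u ⟨z, rfl⟩
    rw [ContinuousLinearMap.coe_coe, ← ContinuousLinearMap.adjoint_inner_right T, hTstarC x hx, inner_zero_right]
  -- C maps (ran T)ᗮ into ker T
  have hTstar0 : ∀ y ∈ M, adjoint T y = 0 := by
    intro y hy
    apply ext_inner_right ℂ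
    intro z
    rw [ContinuousLinearMap.adjoint_inner_left, inner_zero_left]
    rw [← inner_conj_symm,
      (Submodule.mem_orthogonal _ _).mp hy (T z) (LinearMap.mem_range_self _ z), map_zero]
  have hCMN : ∀ y ∈ M, C y ∈ N := by
    intro y hy
    have key : adjoint T (T (C y)) = C (T (adjoint T y)) := by
      have h := hT y
      rw [← h, hCinv]
    have : ⟪T (C y), T (C y)⟫_ℂ = 0 := by
      rw [← ContinuousLinearMap.adjoint_inner_right T, key, hCinner, hTstar0 y hy,
        map_zero, inner_zero_left]
    exact inner_self_eq_zero.mp this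
  -- Hilbert bases
  obtain ⟨w, b, hbcoe⟩ := exists_hilbertBasis ℂ N
  set f : w → M := fun i => ⟨C ((b i : N) : H), hCNM _ (b i).2⟩ with hf
  have hon : Orthonormal ℂ f := by
    rw [orthonormal_iff_ite]
    intro i j
    have h1 : ⟪f i, f j⟫_ℂ = ⟪C ((b i : N) : H), C ((b j : N) : H)⟫_ℂ := rfl
    rw [h1, hCinner]
    have h2 : (⟪((b j : N) : H), ((b i : N) : H)⟫_ℂ) = ⟪b j, b i⟫_ℂ := rfl
    rw [h2, orthonormal_iff_ite.mp b.orthonormal j i]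
    by_cases h : i = j <;> simp [h, eq_comm]
  have hsp : (Submodule.span ℂ (Set.range f))ᗮ = ⊥ := by
    rw [Submodule.eq_bot_iff]
    intro m hm
    have hfm : ∀ i : w, ⟪(f i : H), (m : H)⟫_ℂ = 0 := by
      intro i
      exact (Submodule.mem_orthogonal _ _).mp hm (f i)
        (Submodule.subset_span (Set.mem_range_self i))
    set cm : N := ⟨C (m : H), hCMN _ m.2⟩ with hcm
    have hcmorth : ∀ u ∈ Submodule.span ℂ (Set.range ⇑b), ⟪u, cm⟫_ℂ = 0 := by
      intro u hu
      induction hu using Submodule.span_induction with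
      | mem u hu =>
        obtain ⟨i, rfl⟩ := hu
        have hfm' : ⟪C ((b i : N) : H), (m : H)⟫_ℂ = 0 := hfm i
        have h0 : ⟪(b i : N), cm⟫_ℂ = ⟪((b i : N) : H), C (m : H)⟫_ℂ := rfl
        rw [h0, ← inner_conj_symm, hflip (m : H) ((b i : N) : H), hfm', map_zero]
      | zero => exact inner_zero_left _
      | add u v _ _ hu hv => rw [inner_add_left, hu, hv, add_zero]
      | smul a u _ hu => rw [inner_smul_left, hu, mul_zero]
    have hbot : (Submodule.span ℂ (Set.range ⇑b))ᗮ = ⊥ := by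
      rw [← Submodule.topologicalClosure_eq_top_iff]
      exact b.dense_span
    have : cm ∈ (Submodule.span ℂ (Set.range ⇑b))ᗮ := by
      rw [Submodule.mem_orthogonal]
      exact hcmorth
    rw [hbot] at this
    have hcm0 : C (m : H) = 0 := congrArg Subtype.val this
    have : (m : H) = 0 := by rw [← hCinv (m : H), hcm0, hzero]
    exact Subtype.ext this
  set fb : HilbertBasis w ℂ M := HilbertBasis.mkOfOrthogonalEqBot hon hsp with hfb
  set e : N ≃ₗᵢ[ℂ] M := b.repr.trans fb.repr.symm with he
  -- the isometry T restricted to Nᗮ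
  set Tk : Nᗮ →ₗᵢ[ℂ] H :=
    { toLinearMap := T.toLinearMap ∘ₗ (Nᗮ).subtype
      norm_map' := fun x => hTpi x x.2 } with hTk
  have hTkapp : ∀ a : Nᗮ, Tk a = T (a : H) := fun a => rfl
  -- projections
  set P : H →L[ℂ] Nᗮ := Submodule.orthogonalProjectionOnto Nᗮ with hP
  set Q : H →L[ℂ] N := Submodule.orthogonalProjectionOnto N with hQ
  have hxPQ : ∀ x : H, ((Q x : H) + (P x : H)) = x :=
    fun x => Submodule.starProjection_add_starProjection_orthogonal (K := N) x
  have hTPx : ∀ x : H, T ((P x : H)) = T x := by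
    intro x
    have hsub : x - (P x : H) ∈ N := by
      have := Submodule.sub_starProjection_mem_orthogonal (K := Nᗮ) x
      rwa [Submodule.orthogonal_orthogonal] at this
    have : T (x - (P x : H)) = 0 := LinearMap.mem_ker.mp hsub
    rw [map_sub, sub_eq_zero] at this
    exact this.symm
  -- the unitary U
  set U : H →L[ℂ] H := T + M.subtypeL.comp (e.toLinearIsometry.toContinuousLinearMap.comp Q)
    with hU
  have hUapp : ∀ x : H, U x = T x + ((e (Q x) : M) : H) := fun x => rfl
  -- U preserves inner products
  have hinner : ∀ x y : H, ⟪U x, U y⟫_ℂ = ⟪x, y⟫_ℂ := by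
    intro x y
    rw [hUapp, hUapp, inner_add_left, inner_add_right, inner_add_right]
    have t2 : ⟪T x, ((e (Q y) : M) : H)⟫_ℂ = 0 :=
      Submodule.inner_right_of_mem_orthogonal (LinearMap.mem_range_self _ x) (e (Q y)).2
    have t3 : ⟪((e (Q x) : M) : H), T y⟫_ℂ = 0 :=
      Submodule.inner_left_of_mem_orthogonal (LinearMap.mem_range_self _ y) (e (Q x)).2
    have t1 : ⟪T x, T y⟫_ℂ = ⟪(P x : H), (P y : H)⟫_ℂ := by
      rw [← hTPx x, ← hTPx y, ← hTkapp, ← hTkapp, Tk.inner_map_map]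
      exact Submodule.coe_inner Nᗮ (P x) (P y)
    have t4 : ⟪((e (Q x) : M) : H), ((e (Q y) : M) : H)⟫_ℂ = ⟪(Q x : H), (Q y : H)⟫_ℂ := by
      have : ⟪e (Q x), e (Q y)⟫_ℂ = ⟪Q x, Q y⟫_ℂ := e.inner_map_map _ _
      exact this
    rw [t1, t2, t3, t4]
    have hx := hxPQ x
    have hy := hxPQ y
    conv_rhs => rw [← hx, ← hy]
    rw [inner_add_left, inner_add_right, inner_add_right]
    have c1 : ⟪(Q x : H), (P y : H)⟫_ℂ = 0 :=
      Submodule.inner_right_of_mem_orthogonal (Q x).2 (P y).2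
    have c2 : ⟪(P x : H), (Q y : H)⟫_ℂ = 0 :=
      Submodule.inner_left_of_mem_orthogonal (Q y).2 (P x).2
    rw [c1, c2]
    ring
  -- range of T is closed and equals Mᗮ
  have hranset : ((LinearMap.range (T : H →ₗ[ℂ] H) : Submodule ℂ H) : Set H) = Set.range Tk := by
    ext z
    constructor
    · rintro ⟨x, rfl⟩
      exact ⟨P x, by rw [hTkapp, hTPx]; rfl⟩
    · rintro ⟨a, rfl⟩
      exact ⟨(a : H), rfl⟩
  have hranclosed : IsClosed ((LinearMap.range (T : H →ₗ[ℂ] H) : Submodule ℂ H) : Set H) := by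
    rw [hranset]
    exact Tk.isometry.isClosedEmbedding.isClosed_range
  have hMorth : Mᗮ = LinearMap.range (T : H →ₗ[ℂ] H) := by
    rw [hM, Submodule.orthogonal_orthogonal_eq_closure]
    exact le_antisymm
      ((LinearMap.range (T : H →ₗ[ℂ] H)).topologicalClosure_minimal le_rfl hranclosed)
      (LinearMap.range (T : H →ₗ[ℂ] H)).le_topologicalClosure
  -- U is surjective
  have hsurj : ∀ y : H, ∃ x : H, U x = y := by
    intro y
    have hdec : ((Submodule.orthogonalProjectionOnto M y : H) + (Submodule.orthogonalProjectionOnto Mᗮ y : H)) = y :=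
      Submodule.starProjection_add_starProjection_orthogonal (K := M) y
    have hr : ((Submodule.orthogonalProjectionOnto Mᗮ y : H)) ∈ LinearMap.range (T : H →ₗ[ℂ] H) := by
      rw [← hMorth]; exact (Submodule.orthogonalProjectionOnto Mᗮ y).2
    obtain ⟨a, ha⟩ := hr
    set m' : M := Submodule.orthogonalProjectionOnto M y with hm'
    refine ⟨(P a : H) + ((e.symm m' : N) : H), ?_⟩
    rw [hUapp]
    have hT1 : T ((P a : H) + ((e.symm m' : N) : H)) = (Submodule.orthogonalProjectionOnto Mᗮ y : H) := by
      rw [map_add, hTPx]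
      have : T (((e.symm m' : N) : H)) = 0 := LinearMap.mem_ker.mp (e.symm m' : N).2
      rw [this, add_zero]; exact ha
    have hQ1 : Q ((P a : H) + ((e.symm m' : N) : H)) = e.symm m' := by
      rw [map_add]
      have h1 : Q ((P a : H)) = 0 :=
        Submodule.orthogonalProjectionOnto_apply_of_mem_orthogonal (P a).2
      have h2 : Q (((e.symm m' : N) : H)) = e.symm m' :=
        Submodule.orthogonalProjectionOnto_mem_subspace_eq_self (e.symm m')
      rw [h1, h2, zero_add]
    rw [hT1, hQ1, LinearIsometryEquiv.apply_symm_apply]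
    rw [add_comm]
    exact hdec
  -- conclude
  have h1 : adjoint U * U = 1 := by
    ext x
    rw [ContinuousLinearMap.mul_apply, ContinuousLinearMap.one_apply]
    apply ext_inner_right ℂ
    intro v
    rw [ContinuousLinearMap.adjoint_inner_left]
    exact hinner x v
  have h1' : ∀ z : H, adjoint U (U z) = z := by
    intro z
    have := congrArg (fun (S : H →L[ℂ] H) => S z) h1
    simpa using this
  have h2 : U * adjoint U = 1 := by
    ext y
    obtain ⟨x, rfl⟩ := hsurj y
    rw [ContinuousLinearMap.mul_apply, ContinuousLinearMap.one_apply, h1' x]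
  have h2' : ∀ z : H, U (adjoint U z) = z := by
    intro z
    have := congrArg (fun (S : H →L[ℂ] H) => S z) h2
    simpa using this
  refine ⟨U, h1, h2, ?_, ?_⟩
  · intro x
    rw [h1' (C x), h2' x, hCinv]
  · intro x
    rw [hUapp]
    have h1 : Q ((P x : H)) = 0 :=
      Submodule.orthogonalProjectionOnto_apply_of_mem_orthogonal (P x).2
    rw [hTPx, h1]
    simp
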